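/- Let A be a finite-dimensional lozenge algebra, and define the Laplacians Δ = dd* + d*d, Δ_∂ = ∂∂* + ∂*∂, and Δ_∂̄ = ∂̄∂̄* + ∂̄*∂̄, where adjoints are taken with respect to the inner products on A⁰, A¹, A². Then Δ = Δ_∂ + Δ_∂̄ and Δ_∂ = Δ_∂̄; consequently Δ = 2Δ_∂ = 2Δ_∂̄. -/
import Mathlib


/-- A lozenge algebra: a ℤ-graded unital associative ℂ-algebra `A = A⁰ ⊕ A¹ ⊕ A²`
concentrated in degrees 0,1,2 (with `A¹ = A^{1,0} ⊕ A^{0,1}`), equipped with a degree 1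
derivation `d` with `d² = 0`, a central curvature `θ ∈ A²`, a ℂ-antilinear involution
`*`, a trace `τ : A² → ℂ` (extended by `0` to all of `A`), a Kähler element `ω ∈ A²`
with inverse Lefschetz operator `Λ` (extended by `0` on `A⁰ ⊕ A¹`), positive definite
Hermitian forms on each graded piece, and the Yang–Mills condition `d(Λθ) = 0`. -/
structure LozengeAlgebra (A : Type*) [Ring A] [Algebra ℂ A] where
  A0 : Submodule ℂ A
  A10 : Submodule ℂ A
  A01 : Submodule ℂ A
  A2 : Submodule ℂ A
  p0 : A →ₗ[ℂ] A
  p10 : A →ₗ[ℂ] A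
  p01 : A →ₗ[ℂ] A
  p2 : A →ₗ[ℂ] A
  d : A →ₗ[ℂ] A
  Lam : A →ₗ[ℂ] A
  st : A → A
  tau : A →ₗ[ℂ] ℂ
  theta : A
  omega : A
  -- the projections realize the direct sum decomposition A = A⁰ ⊕ A^{1,0} ⊕ A^{0,1} ⊕ A²
  p0_mem : ∀ x : A, p0 x ∈ A0
  p10_mem : ∀ x : A, p10 x ∈ A10
  p01_mem : ∀ x : A, p01 x ∈ A01
  p2_mem : ∀ x : A, p2 x ∈ A2
  decomp : ∀ x : A, p0 x + p10 x + p01 x + p2 x = x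
  proj_eq : ∀ x0 ∈ A0, ∀ x10 ∈ A10, ∀ x01 ∈ A01, ∀ x2 ∈ A2,
    p0 (x0 + x10 + x01 + x2) = x0 ∧ p10 (x0 + x10 + x01 + x2) = x10 ∧
    p01 (x0 + x10 + x01 + x2) = x01 ∧ p2 (x0 + x10 + x01 + x2) = x2
  -- multiplicative grading
  one_mem : (1 : A) ∈ A0
  mul00 : ∀ a ∈ A0, ∀ b ∈ A0, a * b ∈ A0
  mul0_10 : ∀ a ∈ A0, ∀ b ∈ A10, a * b ∈ A10 ∧ b * a ∈ A10
  mul0_01 : ∀ a ∈ A0, ∀ b ∈ A01, a * b ∈ A01 ∧ b * a ∈ A01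
  mul0_2 : ∀ a ∈ A0, ∀ b ∈ A2, a * b ∈ A2 ∧ b * a ∈ A2
  mul10_10 : ∀ a ∈ A10, ∀ b ∈ A10, a * b = 0
  mul10_01 : ∀ a ∈ A10, ∀ b ∈ A01, a * b ∈ A2 ∧ b * a ∈ A2
  mul01_01 : ∀ a ∈ A01, ∀ b ∈ A01, a * b ∈ A2
  mul1_2 : ∀ a : A, (a ∈ A10 ∨ a ∈ A01) → ∀ b ∈ A2, a * b = 0 ∧ b * a = 0
  mul2_2 : ∀ a ∈ A2, ∀ b ∈ A2, a * b = 0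
  -- the differential
  d0_mem : ∀ x ∈ A0, p10 (d x) + p01 (d x) = d x
  d10_mem : ∀ x ∈ A10, d x ∈ A2
  d01_mem : ∀ x ∈ A01, d x ∈ A2
  d2_zero : ∀ x ∈ A2, d x = 0
  d_sq : ∀ x : A, d (d x) = 0
  leibniz0 : ∀ a ∈ A0, ∀ b : A, d (a * b) = d a * b + a * d b
  leibniz1 : ∀ a : A, (a ∈ A10 ∨ a ∈ A01) → ∀ b : A, d (a * b) = d a * b - a * d b
  leibniz2 : ∀ a ∈ A2, ∀ b : A, d (a * b) = d a * b + a * d b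
  -- the curvature
  theta_mem : theta ∈ A2
  theta_central : ∀ a : A, theta * a = a * theta
  -- the ℂ-antilinear involution
  st_add : ∀ x y : A, st (x + y) = st x + st y
  st_smul : ∀ (c : ℂ) (x : A), st (c • x) = (starRingEnd ℂ c) • st x
  st_invol : ∀ x : A, st (st x) = x
  st_one : st 1 = 1
  st_mem0 : ∀ x ∈ A0, st x ∈ A0
  st_mem10 : ∀ x ∈ A10, st x ∈ A01
  st_mem01 : ∀ x ∈ A01, st x ∈ A10
  st_mem2 : ∀ x ∈ A2, st x ∈ A2
  st_mul0 : ∀ a ∈ A0, ∀ b : A, st (a * b) = st b * st a ∧ st (b * a) = st a * st b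
  st_mul1 : ∀ a b : A, (a ∈ A10 ∨ a ∈ A01) → (b ∈ A10 ∨ b ∈ A01) →
    st (a * b) = -(st b * st a)
  st_d : ∀ x : A, st (d x) = d (st x)
  st_theta : st theta = -theta
  -- the trace
  tau_zero0 : ∀ x ∈ A0, tau x = 0
  tau_zero10 : ∀ x ∈ A10, tau x = 0
  tau_zero01 : ∀ x ∈ A01, tau x = 0
  tau_comm0 : ∀ a ∈ A0, ∀ b : A, tau (a * b) = tau (b * a)
  tau_anticomm1 : ∀ a b : A, (a ∈ A10 ∨ a ∈ A01) → (b ∈ A10 ∨ b ∈ A01) →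
    tau (a * b) = -tau (b * a)
  tau_d : ∀ x : A, tau (d x) = 0
  tau_star : ∀ x ∈ A2, tau (st x) = starRingEnd ℂ (tau x)
  -- the Kähler element and the Lefschetz operators
  omega_mem : omega ∈ A2
  omega_st : st omega = omega
  omega_comm : ∀ a ∈ A0, omega * a = a * omega
  Lam_mem : ∀ x : A, Lam x ∈ A0
  Lam_zero0 : ∀ x ∈ A0, Lam x = 0
  Lam_zero10 : ∀ x ∈ A10, Lam x = 0
  Lam_zero01 : ∀ x ∈ A01, Lam x = 0
  Lam_left_inv : ∀ a ∈ A0, Lam (omega * a) = a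
  Lam_right_inv : ∀ b ∈ A2, omega * Lam b = b
  -- positive definiteness of the four Hermitian forms
  pos0 : ∀ a ∈ A0, a ≠ 0 →
    0 < (tau (omega * (st a * a))).re ∧ (tau (omega * (st a * a))).im = 0
  pos10 : ∀ a ∈ A10, a ≠ 0 →
    0 < (-Complex.I * tau (st a * a)).re ∧ (-Complex.I * tau (st a * a)).im = 0
  pos01 : ∀ a ∈ A01, a ≠ 0 →
    0 < (Complex.I * tau (st a * a)).re ∧ (Complex.I * tau (st a * a)).im = 0
  pos2 : ∀ a ∈ A2, a ≠ 0 →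
    0 < (tau (omega * (st (Lam a) * Lam a))).re ∧
      (tau (omega * (st (Lam a) * Lam a))).im = 0
  -- the Yang–Mills condition
  ym : d (Lam theta) = 0

namespace LozengeAlgebra

variable {A : Type*} [Ring A] [Algebra ℂ A] (Lz : LozengeAlgebra A)

/-- The operator `∂` (the `A^{1,0}`-component of `d` on `A⁰`, and `d` on `A^{0,1}`). -/
def del (x : A) : A := Lz.p10 (Lz.d (Lz.p0 x)) + Lz.d (Lz.p01 x)

/-- The operator `∂̄` (the `A^{0,1}`-component of `d` on `A⁰`, and `d` on `A^{1,0}`). -/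
def delbar (x : A) : A := Lz.p01 (Lz.d (Lz.p0 x)) + Lz.d (Lz.p10 x)

/-- The total inner product on `A = A⁰ ⊕ A^{1,0} ⊕ A^{0,1} ⊕ A²`, the orthogonal sum of
the Hermitian forms `τ(ω a* b)` on `A⁰`, `−iτ(a* b)` on `A^{1,0}`, `iτ(a* b)` on
`A^{0,1}`, and `τ(ω Λ(a)* Λ(b))` on `A²`. -/
noncomputable def innerL (u v : A) : ℂ :=
  Lz.tau (Lz.omega * (Lz.st (Lz.p0 u) * Lz.p0 v))
    + (-Complex.I) * Lz.tau (Lz.st (Lz.p10 u) * Lz.p10 v)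
    + Complex.I * Lz.tau (Lz.st (Lz.p01 u) * Lz.p01 v)
    + Lz.tau (Lz.omega * (Lz.st (Lz.Lam (Lz.p2 u)) * Lz.Lam (Lz.p2 v)))

end LozengeAlgebra

namespace LozengeAlgebra

variable {A : Type*} [Ring A] [Algebra ℂ A] (Lz : LozengeAlgebra A)

/-- Candidate adjoint of `∂`. -/
noncomputable def delS' (v : A) : A :=
  Complex.I • Lz.Lam (Lz.d (Lz.p10 v)) + (-Complex.I) • Lz.p01 (Lz.d (Lz.Lam (Lz.p2 v)))

/-- Candidate adjoint of `∂̄`. -/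
noncomputable def delbarS' (v : A) : A :=
  (-Complex.I) • Lz.Lam (Lz.d (Lz.p01 v)) + Complex.I • Lz.p10 (Lz.d (Lz.Lam (Lz.p2 v)))

/-- Candidate adjoint of `d`. -/
noncomputable def dS' (v : A) : A := Lz.delS' v + Lz.delbarS' v

lemma st_zero : Lz.st 0 = 0 := by
  have h := Lz.st_smul 0 0
  simpa using h

lemma mul01_zero (x : A) (hx : x ∈ Lz.A01) (y : A) (hy : y ∈ Lz.A01) : x * y = 0 := by
  have h := Lz.st_mul1 x y (Or.inr hx) (Or.inr hy)
  have h2 : Lz.st y * Lz.st x = 0 := Lz.mul10_10 _ (Lz.st_mem01 _ hy) _ (Lz.st_mem01 _ hx)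
  have h3 : Lz.st (x * y) = 0 := by rw [h, h2, neg_zero]
  have h4 := congrArg Lz.st h3
  rwa [Lz.st_invol, Lz.st_zero] at h4

lemma omega_absorb (a : A) (ha : a ∈ Lz.A0) (β : A) (hβ : β ∈ Lz.A2) :
    Lz.omega * (Lz.st a * Lz.Lam β) = Lz.st a * β := by
  rw [← mul_assoc, Lz.omega_comm _ (Lz.st_mem0 a ha), mul_assoc, Lz.Lam_right_inv _ hβ]

lemma K1 (a : A) (ha : a ∈ Lz.A0) (b : A) (hb : b ∈ Lz.A10) :
    Lz.tau (Lz.st a * Lz.d b) = -Lz.tau (Lz.st (Lz.p10 (Lz.d a)) * b) := by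
  have h2 : Lz.tau (Lz.d (Lz.st a * b)) = 0 := Lz.tau_d _
  rw [Lz.leibniz0 _ (Lz.st_mem0 a ha) b, map_add] at h2
  have h3 : Lz.d (Lz.st a) = Lz.st (Lz.p10 (Lz.d a)) + Lz.st (Lz.p01 (Lz.d a)) := by
    rw [← Lz.st_d, ← Lz.st_add, Lz.d0_mem _ ha]
  have h4 : Lz.st (Lz.p01 (Lz.d a)) * b = 0 :=
    Lz.mul10_10 _ (Lz.st_mem01 _ (Lz.p01_mem _)) b hb
  rw [h3, add_mul, h4, add_zero] at h2
  linear_combination h2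

lemma K3 (a : A) (ha : a ∈ Lz.A0) (c : A) (hc : c ∈ Lz.A01) :
    Lz.tau (Lz.st a * Lz.d c) = -Lz.tau (Lz.st (Lz.p01 (Lz.d a)) * c) := by
  have h2 : Lz.tau (Lz.d (Lz.st a * c)) = 0 := Lz.tau_d _
  rw [Lz.leibniz0 _ (Lz.st_mem0 a ha) c, map_add] at h2
  have h3 : Lz.d (Lz.st a) = Lz.st (Lz.p10 (Lz.d a)) + Lz.st (Lz.p01 (Lz.d a)) := by
    rw [← Lz.st_d, ← Lz.st_add, Lz.d0_mem _ ha]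
  have h4 : Lz.st (Lz.p10 (Lz.d a)) * c = 0 :=
    Lz.mul01_zero _ (Lz.st_mem10 _ (Lz.p10_mem _)) c hc
  rw [h3, add_mul, h4, zero_add] at h2
  linear_combination h2

lemma K2 (c : A) (hc : c ∈ Lz.A01) (β : A) (hβ : β ∈ Lz.A2) :
    Lz.tau (Lz.omega * (Lz.st (Lz.Lam (Lz.d c)) * Lz.Lam β)) =
      Lz.tau (Lz.st c * Lz.p01 (Lz.d (Lz.Lam β))) := by
  have hfm : Lz.Lam β ∈ Lz.A0 := Lz.Lam_mem β
  have hstc : Lz.st c ∈ Lz.A10 := Lz.st_mem01 c hc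
  have e2 : Lz.st c * Lz.p10 (Lz.d (Lz.Lam β)) = 0 :=
    Lz.mul10_10 _ hstc _ (Lz.p10_mem _)
  have e1 : Lz.st c * Lz.d (Lz.Lam β) = Lz.st c * Lz.p01 (Lz.d (Lz.Lam β)) := by
    conv_lhs => rw [← Lz.d0_mem _ hfm]
    rw [mul_add, e2, zero_add]
  have hparts : Lz.tau (Lz.d (Lz.st c * Lz.Lam β)) = 0 := Lz.tau_d _
  rw [Lz.leibniz1 _ (Or.inl hstc) _, map_sub] at hparts
  have h3 : Lz.d (Lz.st c) = Lz.st (Lz.Lam (Lz.d c)) * Lz.omega := by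
    rw [← Lz.st_d]
    conv_lhs => rw [← Lz.Lam_right_inv _ (Lz.d01_mem c hc)]
    rw [(Lz.st_mul0 _ (Lz.Lam_mem _) Lz.omega).2, Lz.omega_st]
  have h5 : Lz.st (Lz.Lam (Lz.d c)) * Lz.omega * Lz.Lam β
      = Lz.omega * (Lz.st (Lz.Lam (Lz.d c)) * Lz.Lam β) := by
    rw [← Lz.omega_comm _ (Lz.st_mem0 _ (Lz.Lam_mem _)), mul_assoc]
  rw [h3, h5, e1] at hparts
  linear_combination hparts

lemma K4 (b : A) (hb : b ∈ Lz.A10) (β : A) (hβ : β ∈ Lz.A2) :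
    Lz.tau (Lz.omega * (Lz.st (Lz.Lam (Lz.d b)) * Lz.Lam β)) =
      Lz.tau (Lz.st b * Lz.p10 (Lz.d (Lz.Lam β))) := by
  have hfm : Lz.Lam β ∈ Lz.A0 := Lz.Lam_mem β
  have hstb : Lz.st b ∈ Lz.A01 := Lz.st_mem10 b hb
  have e2 : Lz.st b * Lz.p01 (Lz.d (Lz.Lam β)) = 0 :=
    Lz.mul01_zero _ hstb _ (Lz.p01_mem _)
  have e1 : Lz.st b * Lz.d (Lz.Lam β) = Lz.st b * Lz.p10 (Lz.d (Lz.Lam β)) := by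
    conv_lhs => rw [← Lz.d0_mem _ hfm]
    rw [mul_add, e2, add_zero]
  have hparts : Lz.tau (Lz.d (Lz.st b * Lz.Lam β)) = 0 := Lz.tau_d _
  rw [Lz.leibniz1 _ (Or.inr hstb) _, map_sub] at hparts
  have h3 : Lz.d (Lz.st b) = Lz.st (Lz.Lam (Lz.d b)) * Lz.omega := by
    rw [← Lz.st_d]
    conv_lhs => rw [← Lz.Lam_right_inv _ (Lz.d10_mem b hb)]
    rw [(Lz.st_mul0 _ (Lz.Lam_mem _) Lz.omega).2, Lz.omega_st]
  have h5 : Lz.st (Lz.Lam (Lz.d b)) * Lz.omega * Lz.Lam β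
      = Lz.omega * (Lz.st (Lz.Lam (Lz.d b)) * Lz.Lam β) := by
    rw [← Lz.omega_comm _ (Lz.st_mem0 _ (Lz.Lam_mem _)), mul_assoc]
  rw [h3, h5, e1] at hparts
  linear_combination hparts

lemma proj_del (u : A) :
    Lz.p0 (Lz.del u) = 0 ∧ Lz.p10 (Lz.del u) = Lz.p10 (Lz.d (Lz.p0 u)) ∧
    Lz.p01 (Lz.del u) = 0 ∧ Lz.p2 (Lz.del u) = Lz.d (Lz.p01 u) := by
  have h := Lz.proj_eq 0 Lz.A0.zero_mem (Lz.p10 (Lz.d (Lz.p0 u))) (Lz.p10_mem _)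
    0 Lz.A01.zero_mem (Lz.d (Lz.p01 u)) (Lz.d01_mem _ (Lz.p01_mem u))
  simpa [del] using h

lemma proj_delbar (u : A) :
    Lz.p0 (Lz.delbar u) = 0 ∧ Lz.p10 (Lz.delbar u) = 0 ∧
    Lz.p01 (Lz.delbar u) = Lz.p01 (Lz.d (Lz.p0 u)) ∧ Lz.p2 (Lz.delbar u) = Lz.d (Lz.p10 u) := by
  have h := Lz.proj_eq 0 Lz.A0.zero_mem 0 Lz.A10.zero_mem
    (Lz.p01 (Lz.d (Lz.p0 u))) (Lz.p01_mem _) (Lz.d (Lz.p10 u)) (Lz.d10_mem _ (Lz.p10_mem u))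
  simpa [delbar] using h

lemma proj_delS' (v : A) :
    Lz.p0 (Lz.delS' v) = Complex.I • Lz.Lam (Lz.d (Lz.p10 v)) ∧
    Lz.p10 (Lz.delS' v) = 0 ∧
    Lz.p01 (Lz.delS' v) = (-Complex.I) • Lz.p01 (Lz.d (Lz.Lam (Lz.p2 v))) ∧
    Lz.p2 (Lz.delS' v) = 0 := by
  have h := Lz.proj_eq (Complex.I • Lz.Lam (Lz.d (Lz.p10 v)))
      (Lz.A0.smul_mem _ (Lz.Lam_mem _)) 0 Lz.A10.zero_mem
      ((-Complex.I) • Lz.p01 (Lz.d (Lz.Lam (Lz.p2 v)))) (Lz.A01.smul_mem _ (Lz.p01_mem _))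
      0 Lz.A2.zero_mem
  simpa [delS'] using h

lemma proj_delbarS' (v : A) :
    Lz.p0 (Lz.delbarS' v) = (-Complex.I) • Lz.Lam (Lz.d (Lz.p01 v)) ∧
    Lz.p10 (Lz.delbarS' v) = Complex.I • Lz.p10 (Lz.d (Lz.Lam (Lz.p2 v))) ∧
    Lz.p01 (Lz.delbarS' v) = 0 ∧
    Lz.p2 (Lz.delbarS' v) = 0 := by
  have h := Lz.proj_eq ((-Complex.I) • Lz.Lam (Lz.d (Lz.p01 v)))
      (Lz.A0.smul_mem _ (Lz.Lam_mem _))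
      (Complex.I • Lz.p10 (Lz.d (Lz.Lam (Lz.p2 v)))) (Lz.A10.smul_mem _ (Lz.p10_mem _))
      0 Lz.A01.zero_mem 0 Lz.A2.zero_mem
  simpa [delbarS'] using h

lemma d_decomp (x : A) :
    Lz.d x = Lz.p10 (Lz.d (Lz.p0 x)) + Lz.p01 (Lz.d (Lz.p0 x))
      + (Lz.d (Lz.p10 x) + Lz.d (Lz.p01 x)) := by
  conv_lhs => rw [← Lz.decomp x]
  rw [map_add, map_add, map_add, Lz.d2_zero _ (Lz.p2_mem x), add_zero]
  conv_lhs => rw [← Lz.d0_mem _ (Lz.p0_mem x)]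
  abel

lemma proj_d (x : A) :
    Lz.p0 (Lz.d x) = 0 ∧ Lz.p10 (Lz.d x) = Lz.p10 (Lz.d (Lz.p0 x)) ∧
    Lz.p01 (Lz.d x) = Lz.p01 (Lz.d (Lz.p0 x)) ∧
    Lz.p2 (Lz.d x) = Lz.d (Lz.p10 x) + Lz.d (Lz.p01 x) := by
  have h := Lz.proj_eq 0 Lz.A0.zero_mem (Lz.p10 (Lz.d (Lz.p0 x))) (Lz.p10_mem _)
      (Lz.p01 (Lz.d (Lz.p0 x))) (Lz.p01_mem _)
      (Lz.d (Lz.p10 x) + Lz.d (Lz.p01 x))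
      (Lz.A2.add_mem (Lz.d10_mem _ (Lz.p10_mem x)) (Lz.d01_mem _ (Lz.p01_mem x)))
  simp only [zero_add] at h
  rw [← Lz.d_decomp x] at h
  exact h

lemma del_add_delbar (x : A) : Lz.del x + Lz.delbar x = Lz.d x := by
  rw [Lz.d_decomp x]
  simp only [del, delbar]
  abel

lemma innerL_add_left (u u' v : A) :
    Lz.innerL (u + u') v = Lz.innerL u v + Lz.innerL u' v := by
  simp only [innerL, map_add, Lz.st_add, add_mul, mul_add]
  ring

lemma innerL_add_right (u v v' : A) :
    Lz.innerL u (v + v') = Lz.innerL u v + Lz.innerL u v' := by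
  simp only [innerL, map_add, mul_add]
  ring

lemma innerL_sub_right (u v v' : A) :
    Lz.innerL u (v - v') = Lz.innerL u v - Lz.innerL u v' := by
  simp only [innerL, map_sub, mul_sub]
  ring

lemma innerL_self_ne_zero (w : A) (hw : w ≠ 0) : Lz.innerL w w ≠ 0 := by
  have key : Lz.p0 w ≠ 0 ∨ Lz.p10 w ≠ 0 ∨ Lz.p01 w ≠ 0 ∨ Lz.p2 w ≠ 0 := by
    by_contra hc
    push_neg at hc
    obtain ⟨h1, h2, h3, h4⟩ := hc
    exact hw (by rw [← Lz.decomp w, h1, h2, h3, h4]; simp)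
  have t0 : 0 ≤ (Lz.tau (Lz.omega * (Lz.st (Lz.p0 w) * Lz.p0 w))).re := by
    by_cases h : Lz.p0 w = 0
    · simp [h]
    · exact le_of_lt (Lz.pos0 _ (Lz.p0_mem w) h).1
  have t10 : 0 ≤ ((-Complex.I) * Lz.tau (Lz.st (Lz.p10 w) * Lz.p10 w)).re := by
    by_cases h : Lz.p10 w = 0
    · simp [h]
    · exact le_of_lt (Lz.pos10 _ (Lz.p10_mem w) h).1
  have t01 : 0 ≤ (Complex.I * Lz.tau (Lz.st (Lz.p01 w) * Lz.p01 w)).re := by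
    by_cases h : Lz.p01 w = 0
    · simp [h]
    · exact le_of_lt (Lz.pos01 _ (Lz.p01_mem w) h).1
  have t2 : 0 ≤ (Lz.tau (Lz.omega * (Lz.st (Lz.Lam (Lz.p2 w)) * Lz.Lam (Lz.p2 w)))).re := by
    by_cases h : Lz.p2 w = 0
    · simp [h]
    · exact le_of_lt (Lz.pos2 _ (Lz.p2_mem w) h).1
  have pos : 0 < (Lz.innerL w w).re := by
    simp only [innerL, Complex.add_re]
    rcases key with h | h | h | h
    · have := (Lz.pos0 _ (Lz.p0_mem w) h).1
      linarith
    · have := (Lz.pos10 _ (Lz.p10_mem w) h).1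
      linarith
    · have := (Lz.pos01 _ (Lz.p01_mem w) h).1
      linarith
    · have := (Lz.pos2 _ (Lz.p2_mem w) h).1
      linarith
  intro h0
  rw [h0] at pos
  simp at pos

lemma innerL_right_ext (w₁ w₂ : A) (h : ∀ u, Lz.innerL u w₁ = Lz.innerL u w₂) :
    w₁ = w₂ := by
  by_contra hne
  have hw : w₁ - w₂ ≠ 0 := sub_ne_zero_of_ne hne
  have h0 : Lz.innerL (w₁ - w₂) (w₁ - w₂) = 0 := by
    rw [Lz.innerL_sub_right, h (w₁ - w₂), sub_self]
  exact Lz.innerL_self_ne_zero _ hw h0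

lemma adj_del (u v : A) : Lz.innerL (Lz.del u) v = Lz.innerL u (Lz.delS' v) := by
  obtain ⟨q0, q10, q01, q2⟩ := Lz.proj_del u
  obtain ⟨r0, r10, r01, r2⟩ := Lz.proj_delS' v
  simp only [innerL, q0, q10, q01, q2, r0, r10, r01, r2, Lz.st_zero, zero_mul, mul_zero,
    map_zero, map_smul, mul_smul_comm, smul_eq_mul]
  rw [Lz.omega_absorb _ (Lz.p0_mem u) _ (Lz.d10_mem _ (Lz.p10_mem v))]
  linear_combination (-Complex.I) * Lz.K1 _ (Lz.p0_mem u) _ (Lz.p10_mem v)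
    + Lz.K2 _ (Lz.p01_mem u) _ (Lz.p2_mem v)
    + Lz.tau (Lz.st (Lz.p01 u) * Lz.p01 (Lz.d (Lz.Lam (Lz.p2 v)))) * Complex.I_sq

lemma adj_delbar (u v : A) : Lz.innerL (Lz.delbar u) v = Lz.innerL u (Lz.delbarS' v) := by
  obtain ⟨q0, q10, q01, q2⟩ := Lz.proj_delbar u
  obtain ⟨r0, r10, r01, r2⟩ := Lz.proj_delbarS' v
  simp only [innerL, q0, q10, q01, q2, r0, r10, r01, r2, Lz.st_zero, zero_mul, mul_zero,
    map_zero, map_smul, mul_smul_comm, smul_eq_mul]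
  rw [Lz.omega_absorb _ (Lz.p0_mem u) _ (Lz.d01_mem _ (Lz.p01_mem v))]
  linear_combination Complex.I * Lz.K3 _ (Lz.p0_mem u) _ (Lz.p01_mem v)
    + Lz.K4 _ (Lz.p10_mem u) _ (Lz.p2_mem v)
    + Lz.tau (Lz.st (Lz.p10 u) * Lz.p10 (Lz.d (Lz.Lam (Lz.p2 v)))) * Complex.I_sq

lemma adj_d (u v : A) : Lz.innerL (Lz.d u) v = Lz.innerL u (Lz.dS' v) := by
  rw [← Lz.del_add_delbar u, Lz.innerL_add_left, Lz.adj_del, Lz.adj_delbar]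
  simp only [dS', Lz.innerL_add_right]

lemma F1 (x : A) : Lz.delS' (Lz.del x) =
    Complex.I • Lz.Lam (Lz.d (Lz.p10 (Lz.d (Lz.p0 x)))) +
    (-Complex.I) • Lz.p01 (Lz.d (Lz.Lam (Lz.d (Lz.p01 x)))) := by
  simp only [delS', (Lz.proj_del x).2.1, (Lz.proj_del x).2.2.2]

lemma F2 (x : A) : Lz.del (Lz.delS' x) =
    Complex.I • Lz.p10 (Lz.d (Lz.Lam (Lz.d (Lz.p10 x)))) +
    (-Complex.I) • Lz.d (Lz.p01 (Lz.d (Lz.Lam (Lz.p2 x)))) := by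
  simp only [del, (Lz.proj_delS' x).1, (Lz.proj_delS' x).2.2.1, map_smul]

lemma F3 (x : A) : Lz.delbarS' (Lz.delbar x) =
    (-Complex.I) • Lz.Lam (Lz.d (Lz.p01 (Lz.d (Lz.p0 x)))) +
    Complex.I • Lz.p10 (Lz.d (Lz.Lam (Lz.d (Lz.p10 x)))) := by
  simp only [delbarS', (Lz.proj_delbar x).2.2.1, (Lz.proj_delbar x).2.2.2]

lemma F4 (x : A) : Lz.delbar (Lz.delbarS' x) =
    (-Complex.I) • Lz.p01 (Lz.d (Lz.Lam (Lz.d (Lz.p01 x)))) +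
    Complex.I • Lz.d (Lz.p10 (Lz.d (Lz.Lam (Lz.p2 x)))) := by
  simp only [delbar, (Lz.proj_delbarS' x).1, (Lz.proj_delbarS' x).2.1, map_smul]

lemma F5 (x : A) : Lz.d (Lz.delS' x) =
    Complex.I • (Lz.p10 (Lz.d (Lz.Lam (Lz.d (Lz.p10 x)))) +
      Lz.p01 (Lz.d (Lz.Lam (Lz.d (Lz.p10 x))))) +
    (-Complex.I) • Lz.d (Lz.p01 (Lz.d (Lz.Lam (Lz.p2 x)))) := by
  simp only [delS', map_add, map_smul]
  rw [Lz.d0_mem _ (Lz.Lam_mem _)]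

lemma F6 (x : A) : Lz.d (Lz.delbarS' x) =
    (-Complex.I) • (Lz.p10 (Lz.d (Lz.Lam (Lz.d (Lz.p01 x)))) +
      Lz.p01 (Lz.d (Lz.Lam (Lz.d (Lz.p01 x))))) +
    Complex.I • Lz.d (Lz.p10 (Lz.d (Lz.Lam (Lz.p2 x)))) := by
  simp only [delbarS', map_add, map_smul]
  rw [Lz.d0_mem _ (Lz.Lam_mem _)]

lemma F7 (x : A) : Lz.delS' (Lz.d x) =
    Complex.I • Lz.Lam (Lz.d (Lz.p10 (Lz.d (Lz.p0 x)))) +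
    (-Complex.I) • (Lz.p01 (Lz.d (Lz.Lam (Lz.d (Lz.p10 x)))) +
      Lz.p01 (Lz.d (Lz.Lam (Lz.d (Lz.p01 x))))) := by
  simp only [delS', (Lz.proj_d x).2.1, (Lz.proj_d x).2.2.2, map_add]

lemma F8 (x : A) : Lz.delbarS' (Lz.d x) =
    (-Complex.I) • Lz.Lam (Lz.d (Lz.p01 (Lz.d (Lz.p0 x)))) +
    Complex.I • (Lz.p10 (Lz.d (Lz.Lam (Lz.d (Lz.p10 x)))) +
      Lz.p10 (Lz.d (Lz.Lam (Lz.d (Lz.p01 x))))) := by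
  simp only [delbarS', (Lz.proj_d x).2.2.1, (Lz.proj_d x).2.2.2, map_add]

lemma G1 (x : A) : Lz.d (Lz.dS' x) + Lz.dS' (Lz.d x) =
    (Lz.del (Lz.delS' x) + Lz.delS' (Lz.del x)) +
    (Lz.delbar (Lz.delbarS' x) + Lz.delbarS' (Lz.delbar x)) := by
  have e : Lz.d (Lz.dS' x) = Lz.d (Lz.delS' x) + Lz.d (Lz.delbarS' x) := by
    simp only [dS', map_add]
  have e2 : Lz.dS' (Lz.d x) = Lz.delS' (Lz.d x) + Lz.delbarS' (Lz.d x) := rfl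
  rw [e, e2, Lz.F5, Lz.F6, Lz.F7, Lz.F8, Lz.F2, Lz.F1, Lz.F4, Lz.F3]
  module

lemma G2 (x : A) : Lz.del (Lz.delS' x) + Lz.delS' (Lz.del x) =
    Lz.delbar (Lz.delbarS' x) + Lz.delbarS' (Lz.delbar x) := by
  rw [Lz.F2, Lz.F1, Lz.F4, Lz.F3]
  have r1 : Lz.d (Lz.p10 (Lz.d (Lz.p0 x))) = -Lz.d (Lz.p01 (Lz.d (Lz.p0 x))) := by
    have h0 : Lz.d (Lz.p10 (Lz.d (Lz.p0 x))) + Lz.d (Lz.p01 (Lz.d (Lz.p0 x))) = 0 := by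
      rw [← map_add, Lz.d0_mem _ (Lz.p0_mem x), Lz.d_sq]
    exact eq_neg_of_add_eq_zero_left h0
  have r2 : Lz.d (Lz.p01 (Lz.d (Lz.Lam (Lz.p2 x)))) =
      -Lz.d (Lz.p10 (Lz.d (Lz.Lam (Lz.p2 x)))) := by
    have h0 : Lz.d (Lz.p10 (Lz.d (Lz.Lam (Lz.p2 x)))) +
        Lz.d (Lz.p01 (Lz.d (Lz.Lam (Lz.p2 x)))) = 0 := by
      rw [← map_add, Lz.d0_mem _ (Lz.Lam_mem _), Lz.d_sq]
    exact eq_neg_of_add_eq_zero_right h0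
  rw [r1, r2, map_neg]
  module

end LozengeAlgebra


open LozengeAlgebra in
/-- in a finite-dimensional lozenge algebra, for the Laplacians
`Δ = dd* + d*d`, `Δ_∂ = ∂∂* + ∂*∂`, `Δ_∂̄ = ∂̄∂̄* + ∂̄*∂̄` (where `dS`, `delS`,
`delbarS` are the adjoints of `d`, `∂`, `∂̄` with respect to the inner products) one has
`Δ = Δ_∂ + Δ_∂̄` and `Δ_∂ = Δ_∂̄`; consequently `Δ = 2Δ_∂ = 2Δ_∂̄`. -/
theorem lozenge_laplacian_identities
    (A : Type*) [Ring A] [Algebra ℂ A] [FiniteDimensional ℂ A]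
    (Lz : LozengeAlgebra A)
    (dS delS delbarS : A → A)
    (hdS : ∀ u v : A, Lz.innerL (Lz.d u) v = Lz.innerL u (dS v))
    (hdelS : ∀ u v : A, Lz.innerL (Lz.del u) v = Lz.innerL u (delS v))
    (hdelbarS : ∀ u v : A, Lz.innerL (Lz.delbar u) v = Lz.innerL u (delbarS v)) :
    (∀ x : A, Lz.d (dS x) + dS (Lz.d x) =
      (Lz.del (delS x) + delS (Lz.del x)) + (Lz.delbar (delbarS x) + delbarS (Lz.delbar x))) ∧
    (∀ x : A, Lz.del (delS x) + delS (Lz.del x) =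
      Lz.delbar (delbarS x) + delbarS (Lz.delbar x)) ∧
    (∀ x : A, Lz.d (dS x) + dS (Lz.d x) =
      (2 : ℂ) • (Lz.del (delS x) + delS (Lz.del x))) ∧
    (∀ x : A, Lz.d (dS x) + dS (Lz.d x) =
      (2 : ℂ) • (Lz.delbar (delbarS x) + delbarS (Lz.delbar x))) := by
  have hdel : ∀ v, delS v = Lz.delS' v := fun v =>
    Lz.innerL_right_ext _ _ (fun u => (hdelS u v).symm.trans (Lz.adj_del u v))
  have hdelbar : ∀ v, delbarS v = Lz.delbarS' v := fun v =>
    Lz.innerL_right_ext _ _ (fun u => (hdelbarS u v).symm.trans (Lz.adj_delbar u v))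
  have hd : ∀ v, dS v = Lz.dS' v := fun v =>
    Lz.innerL_right_ext _ _ (fun u => (hdS u v).symm.trans (Lz.adj_d u v))
  refine ⟨fun x => ?_, fun x => ?_, fun x => ?_, fun x => ?_⟩
  · simp only [hd, hdel, hdelbar]
    exact Lz.G1 x
  · simp only [hdel, hdelbar]
    exact Lz.G2 x
  · simp only [hd, hdel, two_smul]
    rw [Lz.G1 x, Lz.G2 x]
  · simp only [hd, hdelbar, two_smul]
    rw [Lz.G1 x, Lz.G2 x]
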